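/- Let σ and m be positive integers. Then the minimum, over all weighted bipartite graphs with both vertex parts of size σ and total weight m, of the maximum weight matching value equals ⌈(m − σ)/σ⌉ + 1, where the ceiling is taken of the rational number ((m : ℤ) − σ)/σ; that is, every weight function w : Fin σ → Fin σ → ℕ with ∑_{u,v} w u v = m has a matching of weight at least ⌈(m − σ)/σ⌉ + 1, and there exists such a weight function for which every matching has weight at most ⌈(m − σ)/σ⌉ + 1. -/

import Mathlib

/-- `M` is a matching: no two distinct chosen edges share an endpoint. -/
def IsMatching {σ : ℕ} (M : Finset (Fin σ × Fin σ)) : Prop :=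
  ∀ e ∈ M, ∀ f ∈ M, e ≠ f → e.1 ≠ f.1 ∧ e.2 ≠ f.2

/-- The weight of a matching `M` with respect to the weight function `w`. -/
def matchingWeight {σ : ℕ} (w : Fin σ → Fin σ → ℕ) (M : Finset (Fin σ × Fin σ)) : ℕ :=
  ∑ e ∈ M, w e.1 e.2

theorem min_mwm_eq_ceil_add_one_general
    (σ m : ℕ) (hσ : 0 < σ) (hm : 0 < m) :
    (∀ w : Fin σ → Fin σ → ℕ, (∑ u, ∑ v, w u v) = m →
      ∃ M : Finset (Fin σ × Fin σ), IsMatching M ∧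
        ⌈(((m : ℤ) : ℚ) - ((σ : ℤ) : ℚ)) / ((σ : ℤ) : ℚ)⌉ + 1 ≤ (matchingWeight w M : ℤ)) ∧
    (∃ w : Fin σ → Fin σ → ℕ, (∑ u, ∑ v, w u v) = m ∧
      ∀ M : Finset (Fin σ × Fin σ), IsMatching M →
        (matchingWeight w M : ℤ) ≤ ⌈(((m : ℤ) : ℚ) - ((σ : ℤ) : ℚ)) / ((σ : ℤ) : ℚ)⌉ + 1) := by
  haveI : NeZero σ := ⟨hσ.ne'⟩
  obtain ⟨k, hk⟩ : ∃ k : ℕ, k = (m + σ - 1) / σ := ⟨_, rfl⟩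
  -- basic facts about k
  have hdm : σ * k + (m + σ - 1) % σ = m + σ - 1 := by
    rw [hk]; exact Nat.div_add_mod (m + σ - 1) σ
  have hmod : (m + σ - 1) % σ < σ := Nat.mod_lt _ hσ
  have hk1 : 1 ≤ k := by
    rw [hk, Nat.one_le_div_iff hσ]
    omega
  obtain ⟨P, hP⟩ : ∃ P, P = σ * k := ⟨_, rfl⟩
  obtain ⟨Q, hQ⟩ : ∃ Q, Q = σ * (k - 1) := ⟨_, rfl⟩
  have hPQ : P = Q + σ := by
    have h1 : σ * (k - 1 + 1) = σ * (k - 1) + σ := Nat.mul_succ σ (k - 1)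
    rw [Nat.sub_add_cancel hk1] at h1
    rw [hP, hQ, h1]
  have hdm' : P + (m + σ - 1) % σ = m + σ - 1 := by rw [hP]; exact hdm
  have hA : m ≤ σ * k := by rw [← hP]; omega
  have hB : σ * (k - 1) < m := by rw [← hQ]; omega
  -- the ceiling equals k
  have hceil : ⌈(((m : ℤ) : ℚ) - ((σ : ℤ) : ℚ)) / ((σ : ℤ) : ℚ)⌉ + 1 = (k : ℤ) := by
    have hσQ : ((σ : ℤ) : ℚ) ≠ 0 := by
      push_cast
      exact_mod_cast hσ.ne'
    have hexpr : (((m : ℤ) : ℚ) - ((σ : ℤ) : ℚ)) / ((σ : ℤ) : ℚ)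
        = (m : ℚ) / (σ : ℚ) - 1 := by
      push_cast
      field_simp
    rw [hexpr]
    have : ⌈(m : ℚ) / (σ : ℚ) - 1⌉ = ⌈(m : ℚ) / (σ : ℚ)⌉ - 1 := by
      exact_mod_cast Int.ceil_sub_intCast ((m : ℚ) / (σ : ℚ)) 1
    rw [this]
    have hceq : ⌈(m : ℚ) / (σ : ℚ)⌉ = (k : ℤ) := by
      rw [Int.ceil_eq_iff]
      have hσpos : (0 : ℚ) < (σ : ℚ) := by exact_mod_cast hσ
      have hB' := (Nat.cast_lt (α := ℚ)).2 hB
      have hA' := (Nat.cast_le (α := ℚ)).2 hA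
      push_cast [Nat.cast_sub hk1] at hB' hA'
      constructor
      · rw [lt_div_iff₀ hσpos]
        push_cast
        nlinarith
      · rw [div_le_iff₀ hσpos]
        push_cast
        nlinarith
    omega
  rw [hceil]
  constructor
  · -- lower bound: every weight function has a matching of weight ≥ k
    intro w hw
    -- the σ "diagonal" matchings
    set Mj : Fin σ → Finset (Fin σ × Fin σ) :=
      fun j => Finset.univ.image (fun u : Fin σ => (u, u + j)) with hMj
    have hmatch : ∀ j, IsMatching (Mj j) := by
      intro j e he f hf hef
      simp only [hMj, Finset.mem_image, Finset.mem_univ, true_and] at he hf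
      obtain ⟨u, rfl⟩ := he
      obtain ⟨u', rfl⟩ := hf
      have huu : u ≠ u' := fun h => hef (by rw [h])
      exact ⟨huu, fun h => huu (add_right_cancel h)⟩
    have hwj : ∀ j, matchingWeight w (Mj j) = ∑ u, w u (u + j) := by
      intro j
      rw [matchingWeight, hMj]
      rw [Finset.sum_image (by
        intro a _ b _ hab
        exact (Prod.mk.injEq _ _ _ _ ▸ hab).1)]
    have hsum : ∑ j, matchingWeight w (Mj j) = m := by
      simp only [hwj]
      rw [Finset.sum_comm]
      rw [← hw]
      refine Finset.sum_congr rfl fun u _ => ?_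
      exact Fintype.sum_equiv (Equiv.addLeft u) _ _ (fun j => rfl)
    by_contra hcon
    push_neg at hcon
    have hlt : ∀ j : Fin σ, matchingWeight w (Mj j) ≤ k - 1 := by
      intro j
      have : (matchingWeight w (Mj j) : ℤ) < (k : ℤ) := hcon (Mj j) (hmatch j)
      omega
    have : (m : ℕ) ≤ σ * (k - 1) := by
      calc m = ∑ j, matchingWeight w (Mj j) := hsum.symm
        _ ≤ ∑ _j : Fin σ, (k - 1) := Finset.sum_le_sum fun j _ => hlt j
        _ = σ * (k - 1) := by simp [Finset.sum_const, mul_comm]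
    exact absurd this (Nat.not_le.mpr hB)
  · -- upper bound: concentrate the weight on one row
    set z : Fin σ := ⟨0, hσ⟩ with hz
    set q : ℕ := m / σ with hq
    set r : ℕ := m % σ with hr
    have hqr : σ * q + r = m := Nat.div_add_mod m σ
    have hrσ : r < σ := Nat.mod_lt _ hσ
    have hentry : ∀ v : Fin σ, q + (if (v : ℕ) < r then 1 else 0) ≤ k := by
      intro v
      by_cases hv : (v : ℕ) < r
      · simp only [hv, if_pos]
        have hr1 : 0 < r := lt_of_le_of_lt (Nat.zero_le _) hv
        have h3 : σ * q < m := by rw [← hqr]; exact Nat.lt_add_of_pos_right hr1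
        have h4 : σ * q < σ * k := lt_of_lt_of_le h3 hA
        have h5 : q < k := lt_of_mul_lt_mul_left h4 (Nat.zero_le σ)
        omega
      · simp only [hv, if_neg, not_false_iff, add_zero]
        have h3 : σ * q ≤ σ * k :=
          le_trans (by rw [← hqr]; exact Nat.le_add_right _ _) hA
        exact Nat.le_of_mul_le_mul_left h3 hσ
    refine ⟨fun u v => if u = z then q + (if (v : ℕ) < r then 1 else 0) else 0, ?_, ?_⟩
    · -- total weight is m
      rw [Finset.sum_eq_single_of_mem z (Finset.mem_univ z)
        (fun u _ hu => by simp [hu])]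
      simp only [if_pos rfl, ite_true, eq_self_iff_true]
      rw [Finset.sum_add_distrib]
      have h1 : ∑ _v : Fin σ, q = σ * q := by simp [Finset.sum_const, mul_comm]
      have h2 : ∑ v : Fin σ, (if (v : ℕ) < r then 1 else 0) = r := by
        rw [Fin.sum_univ_eq_sum_range (fun i => if i < r then 1 else 0)]
        have : ∀ i ∈ Finset.range σ, (if i < r then (1:ℕ) else 0)
            = if i ∈ Finset.range r then 1 else 0 := by
          intro i _; simp [Finset.mem_range]
        rw [Finset.sum_congr rfl this, Finset.sum_ite_mem,
          Finset.inter_eq_right.mpr (Finset.range_subset_range.mpr hrσ.le)]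
        simp
      rw [h1, h2, hqr]
    · -- every matching has weight ≤ k
      intro M hM
      have key : matchingWeight (fun u v => if u = z then q + (if (v : ℕ) < r then 1 else 0) else 0) M ≤ k := by
        rw [matchingWeight]
        rw [← Finset.sum_filter_add_sum_filter_not M (fun e => e.1 = z)]
        have h0 : ∑ e ∈ M.filter (fun e => ¬ e.1 = z),
            (if e.1 = z then q + (if (e.2 : ℕ) < r then 1 else 0) else 0) = 0 := by
          refine Finset.sum_eq_zero fun e he => ?_
          rw [Finset.mem_filter] at he
          simp [he.2]
        rw [h0, add_zero]
        have hcard : (M.filter (fun e => e.1 = z)).card ≤ 1 := by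
          rw [Finset.card_le_one]
          intro a ha b hb
          rw [Finset.mem_filter] at ha hb
          by_contra hab
          have := hM a ha.1 b hb.1 hab
          exact this.1 (ha.2.trans hb.2.symm)
        calc ∑ e ∈ M.filter (fun e => e.1 = z),
              (if e.1 = z then q + (if (e.2 : ℕ) < r then 1 else 0) else 0)
            ≤ ∑ _e ∈ M.filter (fun e => e.1 = z), k := by
              refine Finset.sum_le_sum fun e he => ?_
              rw [Finset.mem_filter] at he
              rw [if_pos he.2]
              exact hentry e.2
          _ = (M.filter (fun e => e.1 = z)).card * k := by simp [Finset.sum_const, mul_comm]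
          _ ≤ 1 * k := Nat.mul_le_mul_right k hcard
          _ = k := one_mul k
      exact_mod_cast key
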